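/- For every n ≥ 2, the set-coloring Ramsey number R_{3,2}(K_3, P_n, P_n) equals n. -/

import Mathlib

open SimpleGraph List


/-- Any nodup list whose elements are pairwise related forms a chain. -/
lemma chain_of_clique {V : Type*} {r : V → V → Prop} :
    ∀ l : List V, l.Nodup → (∀ a ∈ l, ∀ b ∈ l, a ≠ b → r a b) → l.Chain' r := by
  intro l
  induction l with
  | nil => intro _ _; exact List.isChain_nil
  | cons a l ih =>
    intro hnd hcl
    rcases List.nodup_cons.1 hnd with ⟨ha, hnd'⟩
    refine List.IsChain.cons (ih hnd' fun x hx y hy => hcl x (by simp [hx]) y (by simp [hy])) ?_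
    intro y hy
    have hyl : y ∈ l := List.mem_of_mem_head? hy
    exact hcl a (by simp) y (by simp [hyl]) (fun h => ha (h ▸ hyl))

lemma clique_cons {V : Type*} {green : V → V → Prop}
    (hsym : ∀ {u v}, green u v → green v u) {w : V} {A : List V}
    (hw : ∀ a ∈ A, green w a)
    (hA : ∀ a ∈ A, ∀ a' ∈ A, a ≠ a' → green a a') :
    ∀ x ∈ w :: A, ∀ y ∈ w :: A, x ≠ y → green x y := by
  intro x hx y hy hxy
  rcases List.mem_cons.1 hx with hx' | hx' <;> rcases List.mem_cons.1 hy with hy' | hy'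
  · exact absurd (hx'.trans hy'.symm) hxy
  · exact hx' ▸ hw y hy'
  · exact hy' ▸ hsym (hw x hx')
  · exact hA x hx' y hy' hxy

/-- helper for the partition case of the key lemma -/
lemma key_step_part {V : Type*} {green : V → V → Prop}
    (hsym : ∀ {u v}, green u v → green v u)
    (w : V) (A B : List V)
    (hnd : (w :: (A ++ B)).Nodup)
    (hw : ∀ a ∈ A, green w a)
    (hA : ∀ a ∈ A, ∀ a' ∈ A, a ≠ a' → green a a')
    (hB : ∀ b ∈ B, ∀ b' ∈ B, b ≠ b' → green b b')
    (hAne : A ≠ []) (hBne : B ≠ [])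
    (hcross : ∀ a ∈ A, ∀ b ∈ B, ¬ green a b) :
    (∃ l : List V, l.Perm (w :: (A ++ B)) ∧ l.Chain' green) ∨
    (∃ A' B' : List V, (A' ++ B').Perm (w :: (A ++ B)) ∧ A' ≠ [] ∧ B' ≠ [] ∧
      (∀ a ∈ A', ∀ a' ∈ A', a ≠ a' → green a a') ∧
      (∀ b ∈ B', ∀ b' ∈ B', b ≠ b' → green b b') ∧
      (∀ a ∈ A', ∀ b ∈ B', ¬ green a b)) := by
  classical
  simp only [List.nodup_cons, List.nodup_append] at hnd
  obtain ⟨hwAB, hndA, hndB, hdisj⟩ := hnd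
  by_cases hb : ∃ b ∈ B, green w b
  · obtain ⟨b, hbB, hgwb⟩ := hb
    obtain ⟨b1, b2, rfl⟩ := List.append_of_mem hbB
    left
    refine ⟨(b1 ++ b2 ++ [b]) ++ (w :: A), ?_, ?_⟩
    · refine List.perm_iff_count.2 fun y => ?_
      simp [List.count_append, List.count_cons]
      ring
    · have hmemB : ∀ x ∈ b1 ++ b2 ++ [b], x ∈ b1 ++ b :: b2 := by
        intro x hx; simp at hx ⊢; tauto
      refine List.IsChain.append ?_ ?_ ?_
      · refine chain_of_clique _ ?_ (fun x hx y hy hxy => hB x (hmemB x hx) y (hmemB y hy) hxy)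
        have : (b1 ++ b2 ++ [b]).Perm (b1 ++ b :: b2) := by
          refine List.perm_iff_count.2 fun y => ?_
          simp [List.count_append, List.count_cons]
        exact this.nodup_iff.2 hndB
      · refine chain_of_clique _ ?_ ?_
        · exact List.nodup_cons.2 ⟨fun h => hwAB (by simp [h]), hndA⟩
        · exact clique_cons hsym hw hA
      · intro x hx y hy
        simp only [List.getLast?_concat, Option.mem_def, Option.some.injEq] at hx
        simp only [List.head?_cons, Option.mem_def, Option.some.injEq] at hy
        subst hx; subst hy
        exact hsym hgwb
  · push_neg at hb
    right
    refine ⟨w :: A, B, by simp, by simp, hBne, clique_cons hsym hw hA, hB, ?_⟩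
    intro a ha b hbB
    rcases List.mem_cons.1 ha with ha' | ha'
    · exact ha' ▸ hb b hbB
    · exact hcross a ha' b hbB

lemma key_lemma {V : Type*} {green : V → V → Prop}
    (hsym : ∀ {u v}, green u v → green v u)
    (htri : ∀ u v w, u ≠ v → u ≠ w → v ≠ w → green u v ∨ green u w ∨ green v w) :
    ∀ L : List V, L.Nodup →
    (∃ l : List V, l.Perm L ∧ l.Chain' green) ∨
    (∃ A B : List V, (A ++ B).Perm L ∧ A ≠ [] ∧ B ≠ [] ∧
      (∀ a ∈ A, ∀ a' ∈ A, a ≠ a' → green a a') ∧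
      (∀ b ∈ B, ∀ b' ∈ B, b ≠ b' → green b b') ∧
      (∀ a ∈ A, ∀ b ∈ B, ¬ green a b)) := by
  classical
  intro L
  induction L with
  | nil => intro _; exact Or.inl ⟨[], List.Perm.refl _, List.isChain_nil⟩
  | cons w L ih =>
    intro hnd
    rcases List.nodup_cons.1 hnd with ⟨hwL, hndL⟩
    rcases ih hndL with ⟨l, hperm, hchain⟩ | ⟨A, B, hperm, hAne, hBne, hA, hB, hcross⟩
    · -- chain case
      rcases l with _ | ⟨v, l'⟩
      · have : L = [] := hperm.symm.eq_nil
        subst this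
        exact Or.inl ⟨[w], List.Perm.refl _, List.isChain_singleton w⟩
      have hndl : (v :: l').Nodup := hperm.nodup_iff.2 hndL
      have hwx : ∀ x ∈ v :: l', w ≠ x := by
        intro x hx h
        exact hwL (h ▸ hperm.subset hx)
      by_cases g1 : green w v
      · exact Or.inl ⟨w :: v :: l', hperm.cons w, List.isChain_cons_cons.2 ⟨g1, hchain⟩⟩
      rcases eq_or_ne l' [] with rfl | hl'ne
      · -- l = [v], ¬ green w v : two singleton cliques
        refine Or.inr ⟨[v], [w], ?_, by simp, by simp, ?_, ?_, ?_⟩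
        · exact (List.perm_append_singleton w [v]).trans (hperm.cons w)
        · intro a ha b hb hab
          rw [List.mem_singleton] at ha hb
          exact absurd (ha.trans hb.symm) hab
        · intro a ha b hb hab
          rw [List.mem_singleton] at ha hb
          exact absurd (ha.trans hb.symm) hab
        · intro a ha b hb h
          rw [List.mem_singleton] at ha hb
          subst ha; subst hb
          exact g1 (hsym h)
      -- l' nonempty
      set lst := l'.getLast hl'ne with hlstdef
      have hlstl' : lst ∈ l' := List.getLast_mem hl'ne
      have hlstmem : lst ∈ v :: l' := by simp [hlstl']
      have hvlst : v ≠ lst := by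
        intro h
        exact (List.nodup_cons.1 hndl).1 (h ▸ hlstl')
      have hglq : (v :: l').getLast? = some lst := by
        have : (v :: l') = [v] ++ l' := rfl
        rw [this, List.getLast?_append_of_ne_nil _ hl'ne,
          List.getLast?_eq_getLast_of_ne_nil hl'ne]
      by_cases g2 : green w lst
      · -- append w at the end
        refine Or.inl ⟨(v :: l') ++ [w], (List.perm_append_singleton w _).trans (hperm.cons w), ?_⟩
        refine List.IsChain.append hchain (List.isChain_singleton w) ?_
        intro p hp q hq
        rw [hglq, Option.mem_def, Option.some.injEq] at hp
        simp only [List.head?_cons, Option.mem_def, Option.some.injEq] at hq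
        subst hp; subst hq
        exact hsym g2
      by_cases g3 : ∃ x ∈ v :: l', green w x
      · -- rotation case
        obtain ⟨x, hx, gwx⟩ := g3
        have hxv : x ≠ v := fun h => g1 (h ▸ gwx)
        have hxlst : x ≠ lst := fun h => g2 (h ▸ gwx)
        have gvlst : green v lst :=
          ((htri w v lst (hwx v (by simp)) (hwx lst hlstmem) hvlst).resolve_left g1).resolve_left g2
        obtain ⟨l1, l2, hsplit⟩ := List.append_of_mem hx
        rcases l1 with _ | ⟨a, t⟩
        · rw [List.nil_append] at hsplit
          exact absurd ((List.cons.injEq ..).mp hsplit).1.symm hxv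
        have hva : v = a ∧ l' = t ++ x :: l2 := by
          rw [List.cons_append] at hsplit
          exact ⟨(List.cons.injEq ..).mp hsplit |>.1, ((List.cons.injEq ..).mp hsplit).2⟩
        obtain ⟨rfl, hl'eq⟩ := hva
        have hl2ne : l2 ≠ [] := by
          rintro rfl
          apply hxlst
          have : l'.getLast? = some x := by
            rw [hl'eq, List.getLast?_append_of_ne_nil _ (by simp)]
            rfl
          rw [List.getLast?_eq_getLast_of_ne_nil hl'ne, Option.some.injEq] at this
          exact this.symm
        have hl2last : l2.getLast? = some lst := by
          have : l'.getLast? = some lst := List.getLast?_eq_getLast_of_ne_nil hl'ne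
          rw [hl'eq] at this
          rwa [show t ++ x :: l2 = (t ++ [x]) ++ l2 by simp,
            List.getLast?_append_of_ne_nil _ hl2ne] at this
        -- original chain split
        have hchain' : List.Chain' green ((v :: t) ++ (x :: l2)) := by
          rw [List.cons_append]
          rw [hl'eq] at hchain
          exact hchain
        obtain ⟨C1, C2, link12⟩ := List.isChain_append.1 hchain'
        refine Or.inl ⟨l2 ++ ((v :: t) ++ [x, w]), ?_, ?_⟩
        · have h1 : (l2 ++ ((v :: t) ++ [x, w])).Perm (w :: (v :: (t ++ x :: l2))) := by
            refine List.perm_iff_count.2 fun y => ?_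
            simp [List.count_append, List.count_cons]
            ring
          refine h1.trans ?_
          have : (v :: (t ++ x :: l2)) = v :: l' := by rw [hl'eq]
          rw [this]
          exact hperm.cons w
        · refine List.IsChain.append C2.tail ?_ ?_
          · refine List.IsChain.append C1 (List.isChain_pair.2 (hsym gwx)) ?_
            intro p hp q hq
            simp only [List.head?_cons, Option.mem_def, Option.some.injEq] at hq
            subst hq
            exact link12 p hp x (by simp)
          · intro p hp q hq
            rw [hl2last, Option.mem_def, Option.some.injEq] at hp
            simp only [List.cons_append, List.head?_cons, Option.mem_def,
              Option.some.injEq] at hq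
            subst hp; subst hq
            exact hsym gvlst
      · -- no green neighbour of w : partition (v :: l'), [w]
        push_neg at g3
        refine Or.inr ⟨v :: l', [w], (List.perm_append_singleton w _).trans (hperm.cons w),
          by simp, by simp, ?_, ?_, ?_⟩
        · intro a ha b hb hab
          exact ((htri w a b (hwx a ha) (hwx b hb) hab).resolve_left (g3 a ha)).resolve_left
            (g3 b hb)
        · intro a ha b hb hab
          rw [List.mem_singleton] at ha hb
          exact absurd (ha.trans hb.symm) hab
        · intro a ha b hb h
          rw [List.mem_singleton] at hb
          subst hb
          exact g3 a ha (hsym h)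
    · -- partition case
      have hnd' : (w :: (A ++ B)).Nodup := ((hperm.cons w).nodup_iff).2 hnd
      have hndflat := hnd'
      simp only [List.nodup_cons, List.nodup_append] at hndflat
      obtain ⟨hwAB, hndA, hndB, hdisj⟩ := hndflat
      have hclaim : (∀ a ∈ A, green w a) ∨ (∀ b ∈ B, green w b) := by
        by_contra h
        push_neg at h
        obtain ⟨⟨a, ha, hga⟩, ⟨b, hb, hgb⟩⟩ := h
        have hwa : w ≠ a := fun h' => hwAB (by simp [h' ▸ ha])
        have hwb : w ≠ b := fun h' => hwAB (by simp [h' ▸ hb])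
        have hab : a ≠ b := fun h' => hdisj a ha b hb h'
        exact hcross a ha b hb
          (((htri w a b hwa hwb hab).resolve_left hga).resolve_left hgb)
      rcases hclaim with hwA | hwB
      · rcases key_step_part hsym w A B hnd' hwA hA hB hAne hBne hcross with
          ⟨l, hp, hc⟩ | ⟨A', B', hp, h1, h2, h3, h4, h5⟩
        · exact Or.inl ⟨l, hp.trans (hperm.cons w), hc⟩
        · exact Or.inr ⟨A', B', hp.trans (hperm.cons w), h1, h2, h3, h4, h5⟩
      · have hnd'' : (w :: (B ++ A)).Nodup := by
          refine (List.Perm.nodup_iff ?_).2 hnd'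
          exact (List.perm_append_comm).cons w
        have hcross' : ∀ b ∈ B, ∀ a ∈ A, ¬ green b a := fun b hb a ha h =>
          hcross a ha b hb (hsym h)
        have hpcomm : (w :: (B ++ A)).Perm (w :: L) :=
          ((List.perm_append_comm).cons w).trans (hperm.cons w)
        rcases key_step_part hsym w B A hnd'' hwB hB hA hBne hAne hcross' with
          ⟨l, hp, hc⟩ | ⟨A', B', hp, h1, h2, h3, h4, h5⟩
        · exact Or.inl ⟨l, hp.trans hpcomm, hc⟩
        · exact Or.inr ⟨A', B', hp.trans hpcomm, h1, h2, h3, h4, h5⟩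


lemma card2_mem {s : Finset (Fin 3)} (hcard : s.card = 2) (h0 : (0 : Fin 3) ∉ s) :
    (1 : Fin 3) ∈ s ∧ (2 : Fin 3) ∈ s := by
  constructor
  · by_contra h1
    have hsub : s ⊆ {2} := by
      intro x hx
      have : ∀ x : Fin 3, x ≠ 0 → x ≠ 1 → x = 2 := by decide
      simp only [Finset.mem_singleton]
      exact this x (fun h => h0 (h ▸ hx)) (fun h => h1 (h ▸ hx))
    have := Finset.card_le_card hsub
    simp [hcard] at this
  · by_contra h2
    have hsub : s ⊆ {1} := by
      intro x hx
      have : ∀ x : Fin 3, x ≠ 0 → x ≠ 2 → x = 1 := by decide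
      simp only [Finset.mem_singleton]
      exact this x (fun h => h0 (h ▸ hx)) (fun h => h2 (h ▸ hx))
    have := Finset.card_le_card hsub
    simp [hcard] at this

lemma card2_mem' {s : Finset (Fin 3)} (hcard : s.card = 2) :
    (1 : Fin 3) ∈ s ∨ (2 : Fin 3) ∈ s := by
  by_contra h
  push_neg at h
  obtain ⟨h1, h2⟩ := h
  have hsub : s ⊆ {0} := by
    intro x hx
    have : ∀ x : Fin 3, x ≠ 1 → x ≠ 2 → x = 0 := by decide
    simp only [Finset.mem_singleton]
    exact this x (fun h => h1 (h ▸ hx)) (fun h => h2 (h ▸ hx))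
  have := Finset.card_le_card hsub
  simp [hcard] at this

lemma chain_to_path {n : ℕ} (χ : Sym2 (Fin n) → Finset (Fin 3)) (c : Fin 3)
    (l : List (Fin n)) (hp : l.Perm (List.finRange n))
    (hc : l.Chain' (fun u v => c ∈ χ s(u, v))) :
    ∃ f : Fin n → Fin n, Function.Injective f ∧
      ∀ u v, (pathGraph n).Adj u v → c ∈ χ s(f u, f v) := by
  have hlen : l.length = n := hp.length_eq.trans List.length_finRange
  have hnd : l.Nodup := hp.nodup_iff.2 (List.nodup_finRange n)
  refine ⟨fun i => l.get (Fin.cast hlen.symm i), ?_, ?_⟩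
  · intro a b hab
    have h2 := congrArg Fin.val (List.nodup_iff_injective_get.1 hnd hab)
    simp only [Fin.coe_cast] at h2
    exact Fin.ext h2
  · intro u v hadj
    rw [pathGraph_adj] at hadj
    have hget := List.isChain_iff_getElem.1 hc
    rcases hadj with h | h
    · have hvlt : (v : ℕ) < l.length := by omega
      have hult : (u : ℕ) + 1 < l.length := by omega
      have e1 : Fin.cast hlen.symm v = (⟨(u : ℕ) + 1, by omega⟩ : Fin l.length) :=
        Fin.ext (by simp [h])
      have e2 : Fin.cast hlen.symm u = (⟨(u : ℕ), by omega⟩ : Fin l.length) :=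
        Fin.ext rfl
      show c ∈ χ s(l.get (Fin.cast hlen.symm u), l.get (Fin.cast hlen.symm v))
      rw [e1, e2]
      exact hget (u : ℕ) hult
    · have hvlt : (u : ℕ) < l.length := by omega
      have hult : (v : ℕ) + 1 < l.length := by omega
      have e1 : Fin.cast hlen.symm u = (⟨(v : ℕ) + 1, by omega⟩ : Fin l.length) :=
        Fin.ext (by simp [h])
      have e2 : Fin.cast hlen.symm v = (⟨(v : ℕ), by omega⟩ : Fin l.length) :=
        Fin.ext rfl
      show c ∈ χ s(l.get (Fin.cast hlen.symm u), l.get (Fin.cast hlen.symm v))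
      rw [Sym2.eq_swap, e1, e2]
      exact hget (v : ℕ) hult


/-- `R_{3,2}(K₃, Pₙ, Pₙ) = n` for `n ≥ 2`. -/
theorem setRamsey_three_two_K3_Pn_Pn (n : ℕ) (hn : 2 ≤ n) :
    IsLeast {N : ℕ | ∀ χ : Sym2 (Fin N) → Finset (Fin 3),
      (∀ e : Sym2 (Fin N), ¬ e.IsDiag → (χ e).card = 2) →
      ((∃ f : Fin 3 → Fin N, Function.Injective f ∧
          ∀ u v, (⊤ : SimpleGraph (Fin 3)).Adj u v → (0 : Fin 3) ∈ χ s(f u, f v)) ∨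
       (∃ f : Fin n → Fin N, Function.Injective f ∧
          ∀ u v, (pathGraph n).Adj u v → (1 : Fin 3) ∈ χ s(f u, f v)) ∨
       (∃ f : Fin n → Fin N, Function.Injective f ∧
          ∀ u v, (pathGraph n).Adj u v → (2 : Fin 3) ∈ χ s(f u, f v)))} n := by
  constructor
  · -- membership : N = n works
    intro χ hcard
    by_cases h0 : ∃ u v w : Fin n, u ≠ v ∧ u ≠ w ∧ v ≠ w ∧
        (0 : Fin 3) ∈ χ s(u, v) ∧ (0 : Fin 3) ∈ χ s(u, w) ∧ (0 : Fin 3) ∈ χ s(v, w)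
    · obtain ⟨u, v, w, huv, huw, hvw, c1, c2, c3⟩ := h0
      left
      refine ⟨![u, v, w], ?_, ?_⟩
      · intro a b hab
        fin_cases a <;> fin_cases b <;> simp_all
      · intro a b hab
        have hne : a ≠ b := hab.ne
        fin_cases a <;> fin_cases b <;>
          simp only [Matrix.cons_val_zero, Matrix.cons_val_one, Matrix.head_cons,
            Matrix.cons_val_two, Matrix.tail_cons] <;>
          first
            | exact absurd rfl hne
            | exact c1
            | exact c2
            | exact c3
            | (rw [Sym2.eq_swap]; first | exact c1 | exact c2 | exact c3)
    · push_neg at h0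
      have hsym : ∀ {u v : Fin n}, (0 : Fin 3) ∉ χ s(u, v) → (0 : Fin 3) ∉ χ s(v, u) := by
        intro u v h
        rwa [Sym2.eq_swap]
      have htri : ∀ u v w : Fin n, u ≠ v → u ≠ w → v ≠ w →
          (0 : Fin 3) ∉ χ s(u, v) ∨ (0 : Fin 3) ∉ χ s(u, w) ∨ (0 : Fin 3) ∉ χ s(v, w) := by
        intro u v w huv huw hvw
        by_contra hcon
        push_neg at hcon
        obtain ⟨d1, d2, d3⟩ := hcon
        exact h0 u v w huv huw hvw d1 d2 d3
      rcases key_lemma hsym htri (List.finRange n) (List.nodup_finRange n) with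
        ⟨l, hp, hc⟩ | ⟨A, B, hp, hAne, hBne, hA, hB, hcross⟩
      · -- a green Hamiltonian chain : color 1 works
        right; left
        apply chain_to_path χ 1 l hp
        have hnd : l.Nodup := hp.nodup_iff.2 (List.nodup_finRange n)
        rw [List.Chain', List.isChain_iff_getElem] at hc ⊢
        intro i hi
        have hne : l.get ⟨i, by omega⟩ ≠ l.get ⟨i + 1, by omega⟩ := by
          intro h
          have := List.nodup_iff_injective_get.1 hnd h
          simp at this
        have hd : ¬ (s(l.get ⟨i, by omega⟩, l.get ⟨i + 1, by omega⟩)).IsDiag := by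
          rw [Sym2.mk_isDiag_iff]
          exact hne
        exact (card2_mem (hcard _ hd) (hc i hi)).1
      · -- two green cliques with non-green cross edges
        have hndAB : (A ++ B).Nodup := hp.nodup_iff.2 (List.nodup_finRange n)
        obtain ⟨hndA, hndB, hdisj⟩ := List.nodup_append.1 hndAB
        set a0 := A.getLast hAne with ha0def
        set b0 := B.head hBne with hb0def
        have ha0 : a0 ∈ A := List.getLast_mem hAne
        have hb0 : b0 ∈ B := List.head_mem hBne
        have hne : a0 ≠ b0 := fun h => hdisj a0 ha0 b0 hb0 h
        have hd : ¬ (s(a0, b0)).IsDiag := by rw [Sym2.mk_isDiag_iff]; exact hne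
        have h0ab : (0 : Fin 3) ∈ χ s(a0, b0) := not_not.1 (hcross a0 ha0 b0 hb0)
        have hlink : ∀ p ∈ A.getLast?, ∀ q ∈ B.head?, p = a0 ∧ q = b0 := by
          intro p hpm q hqm
          rw [List.getLast?_eq_getLast_of_ne_nil hAne, Option.mem_def,
            Option.some.injEq] at hpm
          rw [List.head?_eq_head hBne, Option.mem_def, Option.some.injEq] at hqm
          exact ⟨hpm.symm, hqm.symm⟩
        have hneA : ∀ x ∈ A, ∀ y ∈ A, x ≠ y → ¬ (s(x, y)).IsDiag := by
          intro x _ y _ hxy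
          rw [Sym2.mk_isDiag_iff]; exact hxy
        have hneB : ∀ x ∈ B, ∀ y ∈ B, x ≠ y → ¬ (s(x, y)).IsDiag := by
          intro x _ y _ hxy
          rw [Sym2.mk_isDiag_iff]; exact hxy
        rcases card2_mem' (hcard _ hd) with hc1 | hc2
        · right; left
          apply chain_to_path χ 1 (A ++ B) hp
          refine List.IsChain.append ?_ ?_ ?_
          · exact chain_of_clique A hndA fun x hx y hy hxy =>
              (card2_mem (hcard _ (hneA x hx y hy hxy)) (hA x hx y hy hxy)).1
          · exact chain_of_clique B hndB fun x hx y hy hxy =>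
              (card2_mem (hcard _ (hneB x hx y hy hxy)) (hB x hx y hy hxy)).1
          · intro p hpm q hqm
            obtain ⟨rfl, rfl⟩ := hlink p hpm q hqm
            exact hc1
        · right; right
          apply chain_to_path χ 2 (A ++ B) hp
          refine List.IsChain.append ?_ ?_ ?_
          · exact chain_of_clique A hndA fun x hx y hy hxy =>
              (card2_mem (hcard _ (hneA x hx y hy hxy)) (hA x hx y hy hxy)).2
          · exact chain_of_clique B hndB fun x hx y hy hxy =>
              (card2_mem (hcard _ (hneB x hx y hy hxy)) (hB x hx y hy hxy)).2
          · intro p hpm q hqm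
            obtain ⟨rfl, rfl⟩ := hlink p hpm q hqm
            exact hc2
  · -- lower bound
    intro N hN
    by_contra hlt
    push_neg at hlt
    have hmain := hN (fun _ => ({1, 2} : Finset (Fin 3))) (fun e _ => rfl)
    rcases hmain with ⟨f, hf, hadj⟩ | ⟨f, hf, _⟩ | ⟨f, hf, _⟩
    · have hadj01 : (⊤ : SimpleGraph (Fin 3)).Adj 0 1 := by
        simp [SimpleGraph.top_adj]
      have := hadj 0 1 hadj01
      simp at this
    · have := Fintype.card_le_of_injective f hf
      simp at this
      omega
    · have := Fintype.card_le_of_injective f hf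
      simp at this
      omega
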